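/- arXiv:quant-ph/0308022 — 2 statements merged into one kernel-verified Lean document; each statement's English description precedes it below -/
import Mathlib

section
/- Let Λ be an admissible graph. For every phase-space point ξ^J = (p^J,q^J) ∈ Ξ^J and every q^L ∈ F^L there exists a complex number λ of modulus one, depending only on Λ, q^J and q^L, such that w(ξ^J) ∘ v_{[Λ,q^L]} = λ · z(p^J − Λ^J_J q^J) ∘ v_{[Λ,q^L]} ∘ z(−Λ^I_J q^J) as operators H_I → H_J, where z(p^J − Λ^J_J q^J) acts on H_J and z(−Λ^I_J q^J) acts on H_I. -/
open scoped BigOperators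

noncomputable section

/-- The Hilbert space `H_K` of complex functions on the configurations `F^K`. -/
abbrev HS (F K : Type*) : Type _ := (K → F) → ℂ

/-- The linear map on function spaces given by an integral kernel. -/
def kernelMap {α β : Type*} [Fintype α] (k : β → α → ℂ) : (α → ℂ) →ₗ[ℂ] (β → ℂ) where
  toFun ψ := fun b => ∑ a, k b a * ψ a
  map_add' ψ φ := by
    funext b
    simp only [Pi.add_apply, mul_add, Finset.sum_add_distrib]
  map_smul' c ψ := by
    funext b
    simp only [Pi.smul_apply, smul_eq_mul, RingHom.id_apply, Finset.mul_sum]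
    exact Finset.sum_congr rfl fun _ _ => by ring

/-- The operator of multiplication by a fixed function. -/
def mulFun {α : Type*} (f : α → ℂ) : (α → ℂ) →ₗ[ℂ] (α → ℂ) where
  toFun ψ := fun a => f a * ψ a
  map_add' ψ φ := by funext a; simp [mul_add]
  map_smul' c ψ := by funext a; simp; ring

/-- The pullback (precomposition) operator along a map of configuration spaces. -/
def compMap {α β : Type*} (σ : β → α) : (α → ℂ) →ₗ[ℂ] (β → ℂ) where
  toFun ψ := fun b => ψ (σ b)
  map_add' _ _ := rfl
  map_smul' _ _ := rfl

variable {F : Type*} [Field F] [Fintype F] [DecidableEq F]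

/-- `ε` is an injective character of the additive group of `F` into the unit circle. -/
def IsCharacter (ε : F → ℂ) : Prop :=
  Function.Injective ε ∧ (∀ a, ‖ε a‖ = 1) ∧ ∀ a b, ε (a + b) = ε a * ε b

/-- The symmetric bicharacter `χ(p,q) = Π_k ε(p_k q_k)`. -/
def chi (ε : F → ℂ) {K : Type*} [Fintype K] (p q : K → F) : ℂ := ∏ k, ε (p k * q k)

/-- The shift operator `x(q)`, `(x(q)ψ)(q₁) = ψ(q₁ - q)`. -/
def shiftOp {K : Type*} (q : K → F) : HS F K →ₗ[ℂ] HS F K :=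
  compMap (fun q₁ => q₁ - q)

/-- The multiplier operator `z(p)`, `(z(p)ψ)(q₁) = χ(p,q₁)ψ(q₁)`. -/
def multOp (ε : F → ℂ) {K : Type*} [Fintype K] (p : K → F) : HS F K →ₗ[ℂ] HS F K :=
  mulFun (chi ε p)

/-- The Weyl operator `w(ξ) = z(p)x(q)` of the phase space point `ξ = (p,q)`. -/
def weylOp (ε : F → ℂ) {K : Type*} [Fintype K] (ξ : (K → F) × (K → F)) :
    HS F K →ₗ[ℂ] HS F K :=
  multOp ε ξ.1 ∘ₗ shiftOp ξ.2

/-- The normalization constant `d^(-n/2)` (where `d = |F|`) as a complex number. -/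
def rnorm (F : Type*) [Fintype F] (n : ℕ) : ℂ :=
  (((Fintype.card F : ℝ) ^ (-(n : ℝ) / 2) : ℝ) : ℂ)

/-- The Haar-normalized inner product on `H_K`:
`⟨ψ,φ⟩ = d^(-|K|) Σ_q conj(ψ q) φ q`. -/
def hinner {K : Type*} [Fintype K] [DecidableEq K] (ψ φ : HS F K) : ℂ :=
  ((Fintype.card F : ℂ) ^ (Fintype.card K))⁻¹ *
    ∑ q : K → F, (starRingEnd ℂ) (ψ q) * φ q

/-- The delta-function basis vector located at `q`. -/
def deltaV {K : Type*} [Fintype K] [DecidableEq K] (q : K → F) : HS F K :=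
  fun q' => if q' = q then 1 else 0

/-- The adjoint of an operator with respect to the Haar-normalized inner
products `hinner` on source and target. -/
def hAdj {K M : Type*} [Fintype K] [Fintype M] [DecidableEq K] [DecidableEq M]
    (A : HS F K →ₗ[ℂ] HS F M) : HS F M →ₗ[ℂ] HS F K :=
  kernelMap (fun qK qM =>
    (Fintype.card F : ℂ) ^ (Fintype.card K) * ((Fintype.card F : ℂ) ^ (Fintype.card M))⁻¹ *
      (starRingEnd ℂ) (A (deltaV qK) qM))

variable {I J L : Type*} [Fintype I] [Fintype J] [Fintype L]
  [DecidableEq I] [DecidableEq J] [DecidableEq L]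

/-- Combining configurations on `I`, `J`, `L` into one on `I ⊕ J ⊕ L`. -/
def combine (qI : I → F) (qJ : J → F) (qL : L → F) : (I ⊕ J ⊕ L) → F :=
  Sum.elim qI (Sum.elim qJ qL)

/-- Inclusion of the input vertices. -/
def inI : I → I ⊕ J ⊕ L := Sum.inl
/-- Inclusion of the output vertices. -/
def inJ : J → I ⊕ J ⊕ L := fun j => Sum.inr (Sum.inl j)
/-- Inclusion of the syndrome vertices. -/
def inL : L → I ⊕ J ⊕ L := fun l => Sum.inr (Sum.inr l)
/-- Inclusion of the input and syndrome vertices. -/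
def embIL : I ⊕ L → I ⊕ J ⊕ L := Sum.elim inI inL

/-- The `J`-rows of `Λ` applied to a full configuration (`Λ^J_{IJL} q^{IJL}`). -/
def appJ (Λ : Matrix (I ⊕ J ⊕ L) (I ⊕ J ⊕ L) F) (v : (I ⊕ J ⊕ L) → F) : J → F :=
  fun j => Λ.mulVec v (inJ j)

/-- The `I`-rows of `Λ` applied to a full configuration (`Λ^I_{IJL} q^{IJL}`). -/
def appI (Λ : Matrix (I ⊕ J ⊕ L) (I ⊕ J ⊕ L) F) (v : (I ⊕ J ⊕ L) → F) : I → F :=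
  fun i => Λ.mulVec v (inI i)

/-- The block `Λ^J_{IL}` (rows in `J`, columns in `I ∪ L`). -/
def blockJIL (Λ : Matrix (I ⊕ J ⊕ L) (I ⊕ J ⊕ L) F) : Matrix J (I ⊕ L) F :=
  fun j il => Λ (inJ j) (embIL il)

/-- A weighted graph (adjacency matrix) is admissible: it is symmetric, the block
`Λ^J_{IL}` is invertible and the block `Λ^{IL}_{IL}` vanishes. -/
def Admissible (Λ : Matrix (I ⊕ J ⊕ L) (I ⊕ J ⊕ L) F) : Prop :=
  Λ.IsSymm ∧ (∃ B : Matrix (I ⊕ L) J F, blockJIL Λ * B = 1 ∧ B * blockJIL Λ = 1) ∧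
    ∀ a b : I ⊕ L, Λ (embIL a) (embIL b) = 0

/-- `τ(Λ,·)` is a family of unimodular phases forming a one-dimensional projective
representation: `τ(q₁+q₂) = τ(q₁)τ(q₂)χ(Λq₁,q₂)`. -/
def IsTau (ε : F → ℂ) (Λ : Matrix (I ⊕ J ⊕ L) (I ⊕ J ⊕ L) F)
    (tau : ((I ⊕ J ⊕ L) → F) → ℂ) : Prop :=
  (∀ q, ‖tau q‖ = 1) ∧
    ∀ q₁ q₂, tau (q₁ + q₂) = tau q₁ * tau q₂ * chi ε (Λ.mulVec q₁) q₂

/-- The graph code operator `v_{[Λ,q^L]} : H_I → H_J`,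
`(v ψ)(q^J) = d^(-|I|/2) Σ_{q^I} τ(Λ, q^{IJL}) ψ(q^I)`. -/
def gcode (tau : ((I ⊕ J ⊕ L) → F) → ℂ) (qL : L → F) : HS F I →ₗ[ℂ] HS F J :=
  kernelMap (fun qJ qI => rnorm F (Fintype.card I) * tau (combine qI qJ qL))

/-- The syndrome-table condition `γ_Λ(ξ^J, q^L, ξ^I) = 0`:
`p^J = Λ^J_{IJL} q^{IJL}` and `p^I = Λ^I_J q^J`. -/
def GammaZero (Λ : Matrix (I ⊕ J ⊕ L) (I ⊕ J ⊕ L) F)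
    (pJ qJ : J → F) (qL : L → F) (pI qI : I → F) : Prop :=
  pJ = appJ Λ (combine qI qJ qL) ∧ pI = appI Λ (combine 0 qJ 0)

/-- The weight of a phase space vector `ξ^J = (p^J,q^J)`. -/
def wt {J : Type*} [Fintype J] (pJ qJ : J → F) : ℕ :=
  (Finset.univ.filter fun j => ¬(pJ j = 0 ∧ qJ j = 0)).card

/-- `Λ` is associated with a `t`-error correcting code: for every set `E ⊆ J` with
at most `2t` elements, `Λ^{J∖E}_{IE} q^{IE} = 0` implies `q^I = 0` and
`Λ^I_E q^E = 0`. -/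
def TCode (Λ : Matrix (I ⊕ J ⊕ L) (I ⊕ J ⊕ L) F) (t : ℕ) : Prop :=
  ∀ E : Finset J, E.card ≤ 2 * t → ∀ (qI : I → F) (qJ : J → F),
    (∀ j ∉ E, qJ j = 0) →
    (∀ j ∉ E, appJ Λ (combine qI qJ 0) j = 0) →
    qI = 0 ∧ appI Λ (combine 0 qJ 0) = 0

/-- Tensoring with the standard (shift invariant) vector `Ω_K ≡ 1`:
the isometry `Φ_K : H_M → H_{M⊕K}`, `(Φψ)(q) = ψ(q∘inl)`. -/
def tensOmega {M K : Type*} : HS F M →ₗ[ℂ] HS F (M ⊕ K) :=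
  compMap (fun q => q ∘ Sum.inl)

/-- The Fourier transform acting on the `K`-factor of `H_{M⊕K}`. -/
def fourierR (ε : F → ℂ) {M K : Type*} [Fintype K] [DecidableEq K] :
    HS F (M ⊕ K) →ₗ[ℂ] HS F (M ⊕ K) where
  toFun φ := fun q => ∑ qK' : K → F,
    rnorm F (Fintype.card K) * chi ε (q ∘ Sum.inr) qK' * φ (Sum.elim (q ∘ Sum.inl) qK')
  map_add' φ₁ φ₂ := by
    funext q
    simp only [Pi.add_apply, mul_add, Finset.sum_add_distrib]
  map_smul' c φ := by
    funext q
    simp only [Pi.smul_apply, smul_eq_mul, RingHom.id_apply, Finset.mul_sum]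
    exact Finset.sum_congr rfl fun _ _ => by ring

/-- The multiplier `z(p)` acting on the `K`-factor of `H_{M⊕K}`. -/
def zR (ε : F → ℂ) {M K : Type*} [Fintype K] (p : K → F) :
    HS F (M ⊕ K) →ₗ[ℂ] HS F (M ⊕ K) :=
  mulFun (fun q => chi ε p (q ∘ Sum.inr))

/-- The selected error `ξ^I_{[q^L]}`: the unique `ξ^I` such that
`γ_Λ(ξ^J, q^L, ξ^I) = 0` for some `ξ^J` of weight at most `t`, if such exists,
and `(0,0)` otherwise. -/
def xiSel (Λ : Matrix (I ⊕ J ⊕ L) (I ⊕ J ⊕ L) F) (t : ℕ) (qL : L → F) :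
    (I → F) × (I → F) :=
  @dite _ (∃ ξI : (I → F) × (I → F), ∃ pJ qJ : J → F,
      wt pJ qJ ≤ t ∧ GammaZero Λ pJ qJ qL ξI.1 ξI.2)
    (Classical.dec _) (fun h => h.choose) (fun _ => (0, 0))
private lemma eps_zero' {F : Type*} [Field F] [Fintype F] [DecidableEq F]
    {ε : F → ℂ} (hε : IsCharacter ε) : ε 0 = 1 := by
  have hne : ε 0 ≠ 0 := fun h0 => by simpa [h0] using hε.2.1 0
  have h : ε 0 * ε 0 = ε 0 * 1 := by rw [mul_one, ← hε.2.2]; norm_num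
  exact mul_left_cancel₀ hne h

private lemma eps_sum' {F : Type*} [Field F] [Fintype F] [DecidableEq F]
    {ε : F → ℂ} (hε : IsCharacter ε) {α : Type*} (s : Finset α) (f : α → F) :
    ε (∑ a ∈ s, f a) = ∏ a ∈ s, ε (f a) := by
  classical
  induction s using Finset.induction with
  | empty => simpa using eps_zero' hε
  | @insert _ _ h ih => rw [Finset.sum_insert h, Finset.prod_insert h, hε.2.2, ih]

private lemma chi_eq_eps {F : Type*} [Field F] [Fintype F] [DecidableEq F]
    {ε : F → ℂ} (hε : IsCharacter ε) {K : Type*} [Fintype K] (p q : K → F) :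
    chi ε p q = ε (∑ k, p k * q k) :=
  (eps_sum' hε _ _).symm

/-- Lemma com-rel, part 2. For an admissible graph `Λ`, for every
`q^J` and `q^L` there is a unimodular `λ` (independent of `p^J`) with
`w(ξ^J) v_{[Λ,q^L]} = λ · z(p^J - Λ^J_J q^J) v_{[Λ,q^L]} z(-Λ^I_J q^J)`
for all `p^J`. -/
theorem weyl_gcode_commutation_output
    {F : Type*} [Field F] [Fintype F] [DecidableEq F]
    {I J L : Type*} [Fintype I] [Fintype J] [Fintype L]
    [DecidableEq I] [DecidableEq J] [DecidableEq L]
    (ε : F → ℂ) (hε : IsCharacter ε)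
    (Λ : Matrix (I ⊕ J ⊕ L) (I ⊕ J ⊕ L) F) (hΛ : Admissible Λ)
    (tau : ((I ⊕ J ⊕ L) → F) → ℂ) (htau : IsTau ε Λ tau) :
    ∀ (qJ : J → F) (qL : L → F), ∃ lam : ℂ, ‖lam‖ = 1 ∧
      ∀ pJ : J → F,
        weylOp ε (pJ, qJ) ∘ₗ gcode tau qL
          = lam • (multOp ε (pJ - appJ Λ (combine 0 qJ 0)) ∘ₗ gcode tau qL ∘ₗ
              multOp ε (-(appI Λ (combine 0 qJ 0)))) := by
  classical
  obtain ⟨hsymm, -, -⟩ := hΛ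
  obtain ⟨htabs, htmul⟩ := htau
  intro qJ qL
  set vq : (I ⊕ J ⊕ L) → F := combine 0 qJ 0 with hvq
  refine ⟨tau (-vq) * ε (-(∑ l, Λ.mulVec vq (inL l) * qL l)), ?_, ?_⟩
  · rw [norm_mul, htabs, hε.2.1, one_mul]
  intro pJ
  apply LinearMap.ext
  intro ψ
  funext qJ₁
  have key : ∀ qI : I → F,
      chi ε pJ qJ₁ * tau (combine qI (qJ₁ - qJ) qL)
        = (tau (-vq) * ε (-(∑ l, Λ.mulVec vq (inL l) * qL l))) *
            (chi ε (pJ - appJ Λ vq) qJ₁ * tau (combine qI qJ₁ qL) *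
              chi ε (-(appI Λ vq)) qI) := by
    intro qI
    set u : (I ⊕ J ⊕ L) → F := combine qI qJ₁ qL with hu
    have hcomb : combine qI (qJ₁ - qJ) qL = u + (-vq) := by
      funext a
      rcases a with i | j | l <;> simp [hu, hvq, combine, sub_eq_add_neg]
    -- the bilinear form identity
    have hS : (∑ a, Λ.mulVec u a * (-vq) a)
        = -((∑ i, appI Λ vq i * qI i) + (∑ j, appJ Λ vq j * qJ₁ j)
            + (∑ l, Λ.mulVec vq (inL l) * qL l)) := by
      have hsum : (∑ a, Λ.mulVec u a * vq a) = ∑ b, Λ.mulVec vq b * u b := by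
        simp only [Matrix.mulVec, dotProduct, Finset.sum_mul]
        rw [Finset.sum_comm]
        refine Finset.sum_congr rfl fun b _ => Finset.sum_congr rfl fun a _ => ?_
        rw [hsymm.apply a b]
        ring
      have hsplit : (∑ b, Λ.mulVec vq b * u b)
          = (∑ i, appI Λ vq i * qI i) + (∑ j, appJ Λ vq j * qJ₁ j)
            + (∑ l, Λ.mulVec vq (inL l) * qL l) := by
        rw [Fintype.sum_sum_type, Fintype.sum_sum_type, add_assoc]
        rfl
      calc (∑ a, Λ.mulVec u a * (-vq) a) = -(∑ a, Λ.mulVec u a * vq a) := by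
            rw [← Finset.sum_neg_distrib]
            exact Finset.sum_congr rfl fun a _ => by simp
        _ = _ := by rw [hsum, hsplit]
    rw [hcomb, htmul u (-vq), chi_eq_eps hε, chi_eq_eps hε, chi_eq_eps hε,
      chi_eq_eps hε, hS]
    have harg : (∑ j, pJ j * qJ₁ j) +
        -((∑ i, appI Λ vq i * qI i) + (∑ j, appJ Λ vq j * qJ₁ j)
            + (∑ l, Λ.mulVec vq (inL l) * qL l))
        = -(∑ l, Λ.mulVec vq (inL l) * qL l) + ((∑ j, (pJ - appJ Λ vq) j * qJ₁ j)
            + (∑ i, (-(appI Λ vq)) i * qI i)) := by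
      have h1 : (∑ j, (pJ - appJ Λ vq) j * qJ₁ j)
          = (∑ j, pJ j * qJ₁ j) - (∑ j, appJ Λ vq j * qJ₁ j) := by
        rw [← Finset.sum_sub_distrib]
        exact Finset.sum_congr rfl fun j _ => by simp [sub_mul]
      have h2 : (∑ i, (-(appI Λ vq)) i * qI i) = -(∑ i, appI Λ vq i * qI i) := by
        rw [← Finset.sum_neg_distrib]
        exact Finset.sum_congr rfl fun i _ => by simp
      rw [h1, h2]; ring
    have hfinal : ε (∑ j, pJ j * qJ₁ j) *
        ε (-((∑ i, appI Λ vq i * qI i) + (∑ j, appJ Λ vq j * qJ₁ j)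
            + (∑ l, Λ.mulVec vq (inL l) * qL l)))
        = ε (-(∑ l, Λ.mulVec vq (inL l) * qL l)) *
            (ε (∑ j, (pJ - appJ Λ vq) j * qJ₁ j) * ε (∑ i, (-(appI Λ vq)) i * qI i)) := by
      rw [← hε.2.2, ← hε.2.2, ← hε.2.2, harg]
    calc ε (∑ j, pJ j * qJ₁ j) * (tau u * tau (-vq) * ε (-((∑ i, appI Λ vq i * qI i)
            + (∑ j, appJ Λ vq j * qJ₁ j) + (∑ l, Λ.mulVec vq (inL l) * qL l))))
        = (ε (∑ j, pJ j * qJ₁ j) * ε (-((∑ i, appI Λ vq i * qI i)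
            + (∑ j, appJ Λ vq j * qJ₁ j) + (∑ l, Λ.mulVec vq (inL l) * qL l)))) *
            (tau u * tau (-vq)) := by ring
      _ = _ := by rw [hfinal]; ring
  simp only [weylOp, multOp, shiftOp, mulFun, compMap, gcode, kernelMap,
    LinearMap.comp_apply, LinearMap.smul_apply, LinearMap.coe_mk, AddHom.coe_mk,
    Pi.smul_apply, smul_eq_mul]
  rw [Finset.mul_sum, Finset.mul_sum, Finset.mul_sum]
  refine Finset.sum_congr rfl fun qI _ => ?_
  have := key qI
  calc chi ε pJ qJ₁ * (rnorm F (Fintype.card I) * tau (combine qI (qJ₁ - qJ) qL) * ψ qI)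
      = (chi ε pJ qJ₁ * tau (combine qI (qJ₁ - qJ) qL)) *
          (rnorm F (Fintype.card I) * ψ qI) := by ring
    _ = _ := by rw [this]; ring
end
end

section
/- Let Λ be an admissible graph. Then the graph-code operators satisfy v_{[Λ,q^L]}^* v_{[Λ,q'^L]} = δ_{q^L,q'^L}·1_{H_I} for all q^L, q'^L ∈ F^L, and Σ_{q^L∈F^L} v_{[Λ,q^L]} v_{[Λ,q^L]}^* = 1_{H_J}; in particular each v_{[Λ,q^L]} is an isometry, the family (v_{[Λ,q^L]})_{q^L∈F^L} is a complete family of mutually orthogonal isometries from H_I to H_J, and |J| = |I| + |L|. -/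
open scoped BigOperators

noncomputable section

variable {F : Type*} [Field F] [Fintype F] [DecidableEq F]

variable {I J L : Type*} [Fintype I] [Fintype J] [Fintype L]
  [DecidableEq I] [DecidableEq J] [DecidableEq L]

/-! ### Auxiliary lemmas -/

section AuxLemmas
set_option linter.unusedSectionVars false
open Matrix

variable {F : Type*} [Field F] [Fintype F] [DecidableEq F]

lemma aux_card_ne_zero : (Fintype.card F : ℂ) ≠ 0 := by
  exact_mod_cast Fintype.card_ne_zero

lemma aux_eps_zero {ε : F → ℂ} (hε : IsCharacter ε) : ε 0 = 1 := by
  have h := hε.2.2 0 0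
  have hne : ε 0 ≠ 0 := by
    intro h0
    have h1 := hε.2.1 0
    rw [h0] at h1; simp at h1
  have h2 : ε 0 * ε 0 = ε 0 * 1 := by rw [mul_one, ← h, add_zero]
  exact mul_left_cancel₀ hne h2

lemma aux_eps_ne_one {ε : F → ℂ} (hε : IsCharacter ε) {a : F} (ha : a ≠ 0) : ε a ≠ 1 := by
  intro h
  exact ha (hε.1 (h.trans (aux_eps_zero hε).symm))

lemma aux_eps_sum {ε : F → ℂ} (hε : IsCharacter ε) {K : Type*} (s : Finset K) (f : K → F) :
    ε (∑ k ∈ s, f k) = ∏ k ∈ s, ε (f k) := by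
  classical
  induction s using Finset.induction_on with
  | empty => simpa using aux_eps_zero hε
  | @insert a s ha ih => rw [Finset.sum_insert ha, Finset.prod_insert ha, hε.2.2, ih]

lemma aux_chi_eq {ε : F → ℂ} (hε : IsCharacter ε) {K : Type*} [Fintype K] (p q : K → F) :
    chi ε p q = ε (p ⬝ᵥ q) := by
  rw [chi, show p ⬝ᵥ q = ∑ k, p k * q k from rfl, aux_eps_sum hε]

lemma aux_sum_eps {ε : F → ℂ} (hε : IsCharacter ε) {K : Type*} [Fintype K] [DecidableEq K]
    (m : K → F) :
    ∑ q : K → F, ε (q ⬝ᵥ m) = if m = 0 then (Fintype.card F : ℂ) ^ Fintype.card K else 0 := by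
  by_cases hm : m = 0
  · subst hm
    rw [if_pos rfl]
    have h1 : ∀ q : K → F, ε (q ⬝ᵥ (0 : K → F)) = 1 := fun q => by
      rw [dotProduct_zero]; exact aux_eps_zero hε
    rw [Finset.sum_congr rfl fun q _ => h1 q, Finset.sum_const, Finset.card_univ,
      Fintype.card_fun, nsmul_eq_mul, mul_one]
    push_cast
    ring
  · rw [if_neg hm]
    obtain ⟨k₀, hk₀⟩ : ∃ k, m k ≠ 0 := by
      by_contra h; push_neg at h; exact hm (funext h)
    set S := ∑ q : K → F, ε (q ⬝ᵥ m) with hS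
    have hshift : ε (m k₀) * S = S := by
      rw [hS, Finset.mul_sum]
      calc ∑ q : K → F, ε (m k₀) * ε (q ⬝ᵥ m)
          = ∑ q : K → F, ε ((q + Pi.single k₀ 1) ⬝ᵥ m) := Finset.sum_congr rfl fun q _ => by
            rw [add_dotProduct, single_dotProduct, one_mul, hε.2.2, mul_comm]
        _ = ∑ q : K → F, ε (q ⬝ᵥ m) := by
            rw [← Equiv.sum_comp (Equiv.addRight (Pi.single k₀ (1 : F)))
              (fun q => ε (q ⬝ᵥ m))]
            rfl
    have h0 : (ε (m k₀) - 1) * S = 0 := by rw [sub_mul, one_mul, hshift, sub_self]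
    rcases mul_eq_zero.1 h0 with h | h
    · exact absurd (sub_eq_zero.1 h) (aux_eps_ne_one hε hk₀)
    · exact h

variable {I J L : Type*} [Fintype I] [Fintype J] [Fintype L]
  [DecidableEq I] [DecidableEq J] [DecidableEq L]

lemma aux_tau_ne_zero {ε : F → ℂ} {Λ : Matrix (I ⊕ J ⊕ L) (I ⊕ J ⊕ L) F}
    {tau : ((I ⊕ J ⊕ L) → F) → ℂ} (htau : IsTau ε Λ tau) (q : (I ⊕ J ⊕ L) → F) :
    tau q ≠ 0 := by
  intro h0
  have h1 := htau.1 q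
  rw [h0] at h1; simp at h1

lemma aux_tau_zero {ε : F → ℂ} (hε : IsCharacter ε) {Λ : Matrix (I ⊕ J ⊕ L) (I ⊕ J ⊕ L) F}
    {tau : ((I ⊕ J ⊕ L) → F) → ℂ} (htau : IsTau ε Λ tau) : tau 0 = 1 := by
  have h := htau.2 0 0
  rw [add_zero] at h
  have hchi : chi ε (Λ.mulVec 0) 0 = 1 := by
    rw [aux_chi_eq hε, dotProduct_zero, aux_eps_zero hε]
  rw [hchi, mul_one] at h
  exact mul_left_cancel₀ (aux_tau_ne_zero htau 0) (h.symm.trans (mul_one (tau 0)).symm)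

lemma aux_conj_tau {ε : F → ℂ} {Λ : Matrix (I ⊕ J ⊕ L) (I ⊕ J ⊕ L) F}
    {tau : ((I ⊕ J ⊕ L) → F) → ℂ} (htau : IsTau ε Λ tau) (q : (I ⊕ J ⊕ L) → F) :
    (starRingEnd ℂ) (tau q) * tau q = 1 := by
  rw [mul_comm, Complex.mul_conj, Complex.normSq_eq_norm_sq, htau.1 q]
  norm_num

/-- Padding an `I ⊕ L` configuration by zero on `J`. -/
def padIL {F : Type*} (I J L : Type*) [Zero F] (x : (I ⊕ L) → F) : I ⊕ J ⊕ L → F :=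
  combine (x ∘ Sum.inl) 0 (x ∘ Sum.inr)

/-- Padding a `J` configuration by zero on `I` and `L`. -/
def padJ {F : Type*} (I J L : Type*) [Zero F] (m : J → F) : I ⊕ J ⊕ L → F :=
  combine 0 m 0

lemma aux_dot_padIL (v : (I ⊕ J ⊕ L) → F) (x : (I ⊕ L) → F) :
    v ⬝ᵥ padIL I J L x = (v ∘ embIL) ⬝ᵥ x := by
  simp [dotProduct, padIL, combine, embIL, inI, inL, Fintype.sum_sum_type]

lemma aux_dot_padJ (v : (I ⊕ J ⊕ L) → F) (m : J → F) :
    v ⬝ᵥ padJ I J L m = (v ∘ inJ) ⬝ᵥ m := by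
  simp [dotProduct, padJ, combine, inJ, Fintype.sum_sum_type]

lemma aux_mulVec_IL {Λ : Matrix (I ⊕ J ⊕ L) (I ⊕ J ⊕ L) F} (hsymm : Λ.IsSymm)
    (hz : ∀ a b : I ⊕ L, Λ (embIL a) (embIL b) = 0)
    (qI : I → F) (qJ : J → F) (qL : L → F) (a : I ⊕ L) :
    Λ.mulVec (combine qI qJ qL) (embIL a) = Matrix.vecMul qJ (blockJIL Λ) a := by
  have h1 : ∀ i : I, Λ (embIL a) (Sum.inl i) = 0 := fun i => hz a (Sum.inl i)
  have h2 : ∀ l : L, Λ (embIL a) (Sum.inr (Sum.inr l)) = 0 := fun l => hz a (Sum.inr l)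
  simp only [Matrix.mulVec, Matrix.vecMul, dotProduct, combine, blockJIL,
    Fintype.sum_sum_type, Sum.elim_inl, Sum.elim_inr]
  rw [show ∑ x : I, Λ (embIL a) (Sum.inl x) * qI x = 0 from
      Finset.sum_eq_zero fun i _ => by rw [h1 i, zero_mul],
    show ∑ x : L, Λ (embIL a) (Sum.inr (Sum.inr x)) * qL x = 0 from
      Finset.sum_eq_zero fun l _ => by rw [h2 l, zero_mul],
    zero_add, add_zero]
  refine Finset.sum_congr rfl fun j _ => ?_
  rw [hsymm.apply (Sum.inr (Sum.inl j)) (embIL a), mul_comm]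
  rfl

lemma aux_dot_key2 {Λ : Matrix (I ⊕ J ⊕ L) (I ⊕ J ⊕ L) F} (hΛ : Admissible Λ)
    (qI : I → F) (qJ : J → F) (qL : L → F) (x : (I ⊕ L) → F) :
    Λ.mulVec (combine qI qJ qL) ⬝ᵥ padIL I J L x = qJ ⬝ᵥ (blockJIL Λ).mulVec x := by
  rw [aux_dot_padIL, Matrix.dotProduct_mulVec]
  congr 1
  funext a
  exact aux_mulVec_IL hΛ.1 hΛ.2.2 qI qJ qL a

lemma aux_mulVec_padIL_J {Λ : Matrix (I ⊕ J ⊕ L) (I ⊕ J ⊕ L) F} (x : (I ⊕ L) → F) (j : J) :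
    Λ.mulVec (padIL I J L x) (inJ j) = (blockJIL Λ).mulVec x j := by
  show Λ (inJ j) ⬝ᵥ padIL I J L x = _
  rw [aux_dot_padIL]
  rfl

lemma aux_combine_split (qI : I → F) (qJ : J → F) (qL : L → F) :
    combine qI qJ qL = padIL I J L (Sum.elim qI qL) + padJ I J L qJ := by
  funext v
  cases v with
  | inl i => simp [combine, padIL, padJ]
  | inr w => cases w <;> simp [combine, padIL, padJ]

lemma aux_combine_addIL (qI qI' : I → F) (qJ : J → F) (qL qL' : L → F) :
    combine qI' qJ qL' = combine qI qJ qL + padIL I J L (Sum.elim (qI' - qI) (qL' - qL)) := by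
  funext v
  cases v with
  | inl i => simp [combine, padIL]
  | inr w => cases w <;> simp [combine, padIL]

lemma aux_combine_addJ (qI : I → F) (qJ qJ' : J → F) (qL : L → F) :
    combine qI qJ qL = combine qI qJ' qL + padJ I J L (qJ - qJ') := by
  funext v
  cases v with
  | inl i => simp [combine, padJ]
  | inr w => cases w <;> simp [combine, padJ]

lemma aux_dot_key3 {Λ : Matrix (I ⊕ J ⊕ L) (I ⊕ J ⊕ L) F}
    (qI : I → F) (qJ : J → F) (qL : L → F) (m : J → F) :
    Λ.mulVec (combine qI qJ qL) ⬝ᵥ padJ I J L m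
      = Sum.elim qI qL ⬝ᵥ Matrix.vecMul m (blockJIL Λ)
        + Λ.mulVec (padJ I J L qJ) ⬝ᵥ padJ I J L m := by
  rw [aux_combine_split qI qJ qL, Matrix.mulVec_add, add_dotProduct]
  congr 1
  rw [aux_dot_padJ]
  have h1 : (Λ.mulVec (padIL I J L (Sum.elim qI qL))) ∘ inJ
      = (blockJIL Λ).mulVec (Sum.elim qI qL) := funext fun j => aux_mulVec_padIL_J _ j
  rw [h1, dotProduct_comm, Matrix.dotProduct_mulVec, dotProduct_comm]

lemma aux_mulVec_inj {Λ : Matrix (I ⊕ J ⊕ L) (I ⊕ J ⊕ L) F} (hΛ : Admissible Λ)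
    {x : (I ⊕ L) → F} (h : (blockJIL Λ).mulVec x = 0) : x = 0 := by
  obtain ⟨B, hAB, hBA⟩ := hΛ.2.1
  have h2 := congrArg B.mulVec h
  rwa [Matrix.mulVec_mulVec, hBA, Matrix.one_mulVec, Matrix.mulVec_zero] at h2

lemma aux_vecMul_inj {Λ : Matrix (I ⊕ J ⊕ L) (I ⊕ J ⊕ L) F} (hΛ : Admissible Λ)
    {m : J → F} (h : Matrix.vecMul m (blockJIL Λ) = 0) : m = 0 := by
  obtain ⟨B, hAB, hBA⟩ := hΛ.2.1
  have h2 := congrArg (fun v => Matrix.vecMul v B) h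
  rwa [Matrix.vecMul_vecMul, hAB, Matrix.vecMul_one, Matrix.zero_vecMul] at h2

lemma aux_rnorm_conj (n : ℕ) : (starRingEnd ℂ) (rnorm F n) = rnorm F n :=
  Complex.conj_ofReal _

lemma aux_rnorm_sq (n : ℕ) :
    rnorm F n * rnorm F n = ((Fintype.card F : ℂ) ^ n)⁻¹ := by
  have hpos : (0 : ℝ) < (Fintype.card F : ℝ) := by exact_mod_cast Fintype.card_pos
  rw [rnorm, ← Complex.ofReal_mul, ← Real.rpow_add hpos]
  have h : -(n : ℝ) / 2 + -(n : ℝ) / 2 = -(n : ℝ) := by ring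
  rw [h, Real.rpow_neg hpos.le, Real.rpow_natCast, Complex.ofReal_inv, Complex.ofReal_pow,
    Complex.ofReal_natCast]

lemma aux_kernelMap_congr {α β : Type*} [Fintype α] {k k' : β → α → ℂ}
    (h : ∀ b a, k b a = k' b a) : kernelMap k = kernelMap k' := by
  have h2 : k = k' := funext fun b => funext fun a => h b a
  rw [h2]

lemma aux_kernelMap_comp {α β γ : Type*} [Fintype α] [Fintype β]
    (k₁ : γ → β → ℂ) (k₂ : β → α → ℂ) :
    kernelMap k₁ ∘ₗ kernelMap k₂ = kernelMap (fun c a => ∑ b, k₁ c b * k₂ b a) := by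
  apply LinearMap.ext; intro ψ; funext c
  show ∑ b, k₁ c b * (∑ a, k₂ b a * ψ a) = ∑ a, (∑ b, k₁ c b * k₂ b a) * ψ a
  simp_rw [Finset.mul_sum, Finset.sum_mul]
  rw [Finset.sum_comm]
  exact Finset.sum_congr rfl fun a _ => Finset.sum_congr rfl fun b _ => (mul_assoc _ _ _).symm

lemma aux_kernelMap_id {α : Type*} [Fintype α] [DecidableEq α] :
    kernelMap (fun b a : α => if b = a then (1 : ℂ) else 0) = LinearMap.id := by
  apply LinearMap.ext; intro ψ; funext b
  show ∑ a, (if b = a then (1 : ℂ) else 0) * ψ a = ψ b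
  simp [Finset.sum_ite_eq]

lemma aux_kernelMap_zero {α β : Type*} [Fintype α] :
    kernelMap (fun (_ : β) (_ : α) => (0 : ℂ)) = 0 := by
  apply LinearMap.ext; intro ψ; funext b
  show ∑ a : α, (0 : ℂ) * ψ a = 0
  simp

lemma aux_kernelMap_sum {α β ι : Type*} [Fintype α] (s : Finset ι) (k : ι → β → α → ℂ) :
    ∑ i ∈ s, kernelMap (k i) = kernelMap (fun b a => ∑ i ∈ s, k i b a) := by
  apply LinearMap.ext; intro ψ; funext b
  rw [LinearMap.sum_apply, Finset.sum_apply]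
  show ∑ i ∈ s, ∑ a, k i b a * ψ a = ∑ a, (∑ i ∈ s, k i b a) * ψ a
  rw [Finset.sum_comm]
  exact Finset.sum_congr rfl fun a _ => (Finset.sum_mul _ _ _).symm

lemma aux_kernelMap_delta {α β : Type*} [Fintype α] [DecidableEq α]
    (k : β → α → ℂ) (a₀ : α) (b : β) :
    kernelMap k (fun a => if a = a₀ then (1 : ℂ) else 0) b = k b a₀ := by
  show ∑ a, k b a * (if a = a₀ then (1 : ℂ) else 0) = k b a₀
  simp [Finset.sum_ite_eq']

lemma aux_hAdj_kernelMap {K M : Type*} [Fintype K] [Fintype M] [DecidableEq K] [DecidableEq M]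
    (k : (M → F) → (K → F) → ℂ) :
    hAdj (F := F) (kernelMap k) = kernelMap (fun qK qM =>
      (Fintype.card F : ℂ) ^ Fintype.card K * ((Fintype.card F : ℂ) ^ Fintype.card M)⁻¹ *
        (starRingEnd ℂ) (k qM qK)) := by
  unfold hAdj
  apply aux_kernelMap_congr
  intro qK qM
  have h1 : kernelMap k (deltaV qK) qM = k qM qK := aux_kernelMap_delta k qK qM
  rw [h1]

lemma aux_sum_sum_factor {α β : Type*} [Fintype α] [Fintype β] (C : ℂ) (a : α → ℂ) (b : β → ℂ) :
    ∑ y : β, ∑ x : α, C * (a x * b y) = C * ((∑ x, a x) * (∑ y, b y)) := by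
  calc ∑ y : β, ∑ x : α, C * (a x * b y)
      = ∑ y : β, (∑ x, a x) * (C * b y) := Finset.sum_congr rfl fun y _ => by
        rw [Finset.sum_mul]
        exact Finset.sum_congr rfl fun x _ => by ring
    _ = (∑ x, a x) * (C * ∑ y, b y) := by rw [← Finset.mul_sum, ← Finset.mul_sum]
    _ = C * ((∑ x, a x) * (∑ y, b y)) := by ring

lemma aux_key2 {ε : F → ℂ} (hε : IsCharacter ε) {Λ : Matrix (I ⊕ J ⊕ L) (I ⊕ J ⊕ L) F}
    (hΛ : Admissible Λ) {tau : ((I ⊕ J ⊕ L) → F) → ℂ} (htau : IsTau ε Λ tau)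
    (qI qI' : I → F) (qL qL' : L → F) :
    ∑ qJ : J → F, (starRingEnd ℂ) (tau (combine qI qJ qL)) * tau (combine qI' qJ qL')
      = if qI = qI' ∧ qL = qL' then (Fintype.card F : ℂ) ^ Fintype.card J else 0 := by
  classical
  set x : (I ⊕ L) → F := Sum.elim (qI' - qI) (qL' - qL) with hxdef
  have hterm : ∀ qJ : J → F,
      (starRingEnd ℂ) (tau (combine qI qJ qL)) * tau (combine qI' qJ qL')
        = tau (padIL I J L x) * ε (qJ ⬝ᵥ (blockJIL Λ).mulVec x) := by
    intro qJ
    rw [aux_combine_addIL qI qI' qJ qL qL', htau.2, aux_chi_eq hε, aux_dot_key2 hΛ]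
    calc (starRingEnd ℂ) (tau (combine qI qJ qL)) *
          (tau (combine qI qJ qL) * tau (padIL I J L x) * ε (qJ ⬝ᵥ (blockJIL Λ).mulVec x))
        = ((starRingEnd ℂ) (tau (combine qI qJ qL)) * tau (combine qI qJ qL)) *
            (tau (padIL I J L x) * ε (qJ ⬝ᵥ (blockJIL Λ).mulVec x)) := by ring
      _ = tau (padIL I J L x) * ε (qJ ⬝ᵥ (blockJIL Λ).mulVec x) := by
          rw [aux_conj_tau htau, one_mul]
  rw [Finset.sum_congr rfl fun qJ _ => hterm qJ, ← Finset.mul_sum, aux_sum_eps hε]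
  by_cases hc : qI = qI' ∧ qL = qL'
  · have hx0 : x = 0 := by
      funext v
      cases v with
      | inl i => simp [hxdef, hc.1]
      | inr l => simp [hxdef, hc.2]
    have hpad : padIL I J L (0 : (I ⊕ L) → F) = (0 : (I ⊕ J ⊕ L) → F) := by
      funext v
      cases v with
      | inl i => rfl
      | inr w => cases w <;> rfl
    rw [if_pos hc, if_pos (by rw [hx0, Matrix.mulVec_zero]), hx0, hpad,
      aux_tau_zero hε htau, one_mul]
  · rw [if_neg hc, if_neg, mul_zero]
    intro h0
    have hx0 : x = 0 := aux_mulVec_inj hΛ h0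
    apply hc
    constructor
    · funext i
      have h := congrFun hx0 (Sum.inl i)
      simp only [hxdef, Sum.elim_inl, Pi.sub_apply, Pi.zero_apply, sub_eq_zero] at h
      exact h.symm
    · funext l
      have h := congrFun hx0 (Sum.inr l)
      simp only [hxdef, Sum.elim_inr, Pi.sub_apply, Pi.zero_apply, sub_eq_zero] at h
      exact h.symm

lemma aux_key3 {ε : F → ℂ} (hε : IsCharacter ε) {Λ : Matrix (I ⊕ J ⊕ L) (I ⊕ J ⊕ L) F}
    (hΛ : Admissible Λ) {tau : ((I ⊕ J ⊕ L) → F) → ℂ} (htau : IsTau ε Λ tau)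
    (qJ qJ' : J → F) :
    ∑ qL : L → F, ∑ qI : I → F,
        tau (combine qI qJ qL) * (starRingEnd ℂ) (tau (combine qI qJ' qL))
      = if qJ = qJ' then (Fintype.card F : ℂ) ^ (Fintype.card I + Fintype.card L) else 0 := by
  classical
  set m : J → F := qJ - qJ' with hmdef
  set n : (I ⊕ L) → F := Matrix.vecMul m (blockJIL Λ) with hndef
  set c : F := Λ.mulVec (padJ I J L qJ') ⬝ᵥ padJ I J L m with hcdef
  have hsplit : ∀ (qI : I → F) (qL : L → F),
      Sum.elim qI qL ⬝ᵥ n = qI ⬝ᵥ (n ∘ Sum.inl) + qL ⬝ᵥ (n ∘ Sum.inr) := by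
    intro qI qL
    simp [dotProduct, Fintype.sum_sum_type]
  have hterm : ∀ (qL : L → F) (qI : I → F),
      tau (combine qI qJ qL) * (starRingEnd ℂ) (tau (combine qI qJ' qL))
        = (tau (padJ I J L m) * ε c) * (ε (qI ⬝ᵥ (n ∘ Sum.inl)) * ε (qL ⬝ᵥ (n ∘ Sum.inr))) := by
    intro qL qI
    rw [aux_combine_addJ qI qJ qJ' qL, htau.2, aux_chi_eq hε, aux_dot_key3, hε.2.2,
      ← hndef, ← hcdef, hsplit qI qL, hε.2.2]
    calc tau (combine qI qJ' qL) * tau (padJ I J L m) *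
            (ε (qI ⬝ᵥ (n ∘ Sum.inl)) * ε (qL ⬝ᵥ (n ∘ Sum.inr)) * ε c) *
          (starRingEnd ℂ) (tau (combine qI qJ' qL))
        = ((starRingEnd ℂ) (tau (combine qI qJ' qL)) * tau (combine qI qJ' qL)) *
            ((tau (padJ I J L m) * ε c) *
              (ε (qI ⬝ᵥ (n ∘ Sum.inl)) * ε (qL ⬝ᵥ (n ∘ Sum.inr)))) := by ring
      _ = _ := by rw [aux_conj_tau htau, one_mul]
  rw [Finset.sum_congr rfl fun qL _ => Finset.sum_congr rfl fun qI _ => hterm qL qI]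
  have hfact : ∑ qL : L → F, ∑ qI : I → F,
      (tau (padJ I J L m) * ε c) * (ε (qI ⬝ᵥ (n ∘ Sum.inl)) * ε (qL ⬝ᵥ (n ∘ Sum.inr)))
      = (tau (padJ I J L m) * ε c) *
        ((∑ qI : I → F, ε (qI ⬝ᵥ (n ∘ Sum.inl))) * (∑ qL : L → F, ε (qL ⬝ᵥ (n ∘ Sum.inr)))) :=
    aux_sum_sum_factor _ _ _
  rw [hfact, aux_sum_eps hε, aux_sum_eps hε]
  by_cases hq : qJ = qJ'
  · have hm0 : m = 0 := by rw [hmdef, hq, sub_self]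
    have hn0 : n = 0 := by rw [hndef, hm0, Matrix.zero_vecMul]
    have hpad : padJ I J L (0 : J → F) = (0 : (I ⊕ J ⊕ L) → F) := by
      funext v
      cases v with
      | inl i => rfl
      | inr w => cases w <;> rfl
    have hc0 : c = 0 := by rw [hcdef, hm0, hpad, dotProduct_zero]
    have hnI : (n ∘ Sum.inl : I → F) = 0 := by rw [hn0]; rfl
    have hnL : (n ∘ Sum.inr : L → F) = 0 := by rw [hn0]; rfl
    rw [if_pos hq, if_pos hnI, if_pos hnL, hm0, hpad, aux_tau_zero hε htau, hc0,
      aux_eps_zero hε, mul_one, one_mul, pow_add]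
  · have hm : m ≠ 0 := fun h => hq (sub_eq_zero.1 (hmdef ▸ h))
    have hn : n ≠ 0 := fun h => hm (aux_vecMul_inj hΛ (hndef ▸ h))
    obtain ⟨v, hv⟩ : ∃ v, n v ≠ 0 := by
      by_contra h; push_neg at h; exact hn (funext h)
    rw [if_neg hq]
    cases v with
    | inl i =>
        have hni : ¬((n ∘ Sum.inl : I → F) = 0) := fun h => hv (congrFun h i)
        rw [if_neg hni, zero_mul, mul_zero]
    | inr l =>
        have hnl : ¬((n ∘ Sum.inr : L → F) = 0) := fun h => hv (congrFun h l)
        rw [if_neg hnl, mul_zero, mul_zero]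

lemma aux_hAdj_spec {K M : Type*} [Fintype K] [Fintype M] [DecidableEq K] [DecidableEq M]
    (A : HS F K →ₗ[ℂ] HS F M) (ψ : HS F K) (φ : HS F M) :
    hinner (A ψ) φ = hinner ψ (hAdj A φ) := by
  classical
  have hKne : ((Fintype.card F : ℂ) ^ Fintype.card K) ≠ 0 := pow_ne_zero _ aux_card_ne_zero
  have hMne : ((Fintype.card F : ℂ) ^ Fintype.card M) ≠ 0 := pow_ne_zero _ aux_card_ne_zero
  have hexp : ∀ qM, A ψ qM = ∑ qK : K → F, ψ qK * A (deltaV qK) qM := by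
    intro qM
    have hψ : ψ = ∑ qK : K → F, ψ qK • deltaV qK := by
      funext q'
      rw [Finset.sum_apply]
      simp only [Pi.smul_apply, deltaV, smul_eq_mul, mul_ite, mul_one, mul_zero]
      rw [Finset.sum_ite_eq Finset.univ q' ψ]
      simp
    conv_lhs => rw [hψ]
    rw [map_sum, Finset.sum_apply]
    simp only [_root_.map_smul, Pi.smul_apply, smul_eq_mul]
  have hR : ∀ qK : K → F, hAdj A φ qK
      = ∑ qM : M → F, (Fintype.card F : ℂ) ^ Fintype.card K *
          ((Fintype.card F : ℂ) ^ Fintype.card M)⁻¹ *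
          (starRingEnd ℂ) (A (deltaV qK) qM) * φ qM := fun qK => rfl
  have hL : ∑ qM : M → F, (starRingEnd ℂ) (A ψ qM) * φ qM
      = ∑ qM : M → F, ∑ qK : K → F,
          (starRingEnd ℂ) (ψ qK) * (starRingEnd ℂ) (A (deltaV qK) qM) * φ qM := by
    refine Finset.sum_congr rfl fun qM _ => ?_
    rw [hexp qM, map_sum, Finset.sum_mul]
    refine Finset.sum_congr rfl fun qK _ => ?_
    rw [_root_.map_mul]
  rw [hinner, hinner, hL]
  have hswap : ∑ qM : M → F, ∑ qK : K → F,
      (starRingEnd ℂ) (ψ qK) * (starRingEnd ℂ) (A (deltaV qK) qM) * φ qM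
      = ∑ qK : K → F, ∑ qM : M → F,
        (starRingEnd ℂ) (ψ qK) * (starRingEnd ℂ) (A (deltaV qK) qM) * φ qM :=
    Finset.sum_comm
  rw [hswap]
  simp only [hR, Finset.mul_sum]
  refine Finset.sum_congr rfl fun qK _ => ?_
  refine Finset.sum_congr rfl fun qM _ => ?_
  field_simp

end AuxLemmas
/-- For an admissible graph `Λ`, the graph code operators satisfy
`v_{[Λ,q^L]}^* v_{[Λ,q'^L]} = δ_{q^L,q'^L} 1`, `Σ_{q^L} v_{[Λ,q^L]} v_{[Λ,q^L]}^* = 1`;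
in particular each `v_{[Λ,q^L]}` is an isometry, the family is a complete family of
mutually orthogonal isometries, and `|J| = |I| + |L|`. (Here `hAdj` is the adjoint
with respect to the Haar-normalized inner products, as certified by the first
conjunct.) -/
theorem gcode_complete_family_of_isometries
    {F : Type*} [Field F] [Fintype F] [DecidableEq F]
    {I J L : Type*} [Fintype I] [Fintype J] [Fintype L]
    [DecidableEq I] [DecidableEq J] [DecidableEq L]
    (ε : F → ℂ) (hε : IsCharacter ε)
    (Λ : Matrix (I ⊕ J ⊕ L) (I ⊕ J ⊕ L) F) (hΛ : Admissible Λ)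
    (tau : ((I ⊕ J ⊕ L) → F) → ℂ) (htau : IsTau ε Λ tau) :
    (∀ (qL : L → F) (ψ : HS F I) (φ : HS F J),
      hinner (gcode tau qL ψ) φ = hinner ψ (hAdj (gcode tau qL) φ)) ∧
    (∀ qL qL' : L → F,
      hAdj (gcode tau qL) ∘ₗ gcode tau qL'
        = if qL = qL' then LinearMap.id else 0) ∧
    ((∑ qL : L → F, gcode tau qL ∘ₗ hAdj (gcode tau qL)) = LinearMap.id) ∧
    (∀ (qL : L → F) (ψ φ : HS F I),
      hinner (gcode tau qL ψ) (gcode tau qL φ) = hinner ψ φ) ∧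
    Fintype.card J = Fintype.card I + Fintype.card L := by
  classical
  have hdF : (Fintype.card F : ℂ) ≠ 0 := aux_card_ne_zero
  have hpowI : ((Fintype.card F : ℂ) ^ Fintype.card I) ≠ 0 := pow_ne_zero _ hdF
  have hpowJ : ((Fintype.card F : ℂ) ^ Fintype.card J) ≠ 0 := pow_ne_zero _ hdF
  -- cardinality relation
  have hcard : Fintype.card J = Fintype.card I + Fintype.card L := by
    obtain ⟨B, hAB, hBA⟩ := hΛ.2.1
    have e : ((I ⊕ L) → F) ≃ₗ[F] (J → F) :=
      LinearEquiv.ofLinear (Matrix.toLin' (blockJIL Λ)) (Matrix.toLin' B)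
        (by rw [← Matrix.toLin'_mul, hAB, Matrix.toLin'_one])
        (by rw [← Matrix.toLin'_mul, hBA, Matrix.toLin'_one])
    have h := e.finrank_eq
    rw [Module.finrank_pi, Module.finrank_pi, Fintype.card_sum] at h
    omega
  have hgc : ∀ qL : L → F, gcode (I := I) tau qL
      = kernelMap (fun qJ qI => rnorm F (Fintype.card I) * tau (combine qI qJ qL)) :=
    fun _ => rfl
  -- mutual orthogonality
  have horth : ∀ qL qL' : L → F,
      hAdj (gcode tau qL) ∘ₗ gcode tau qL' = if qL = qL' then LinearMap.id else 0 := by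
    intro qL qL'
    rw [hgc qL, hgc qL', aux_hAdj_kernelMap, aux_kernelMap_comp]
    have hker : ∀ qI qI' : I → F,
        (∑ qJ : J → F,
          ((Fintype.card F : ℂ) ^ Fintype.card I * ((Fintype.card F : ℂ) ^ Fintype.card J)⁻¹ *
            (starRingEnd ℂ) (rnorm F (Fintype.card I) * tau (combine qI qJ qL))) *
          (rnorm F (Fintype.card I) * tau (combine qI' qJ qL')))
        = if qI = qI' ∧ qL = qL' then 1 else 0 := by
      intro qI qI'
      have hstep : ∀ qJ : J → F,
          ((Fintype.card F : ℂ) ^ Fintype.card I * ((Fintype.card F : ℂ) ^ Fintype.card J)⁻¹ *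
            (starRingEnd ℂ) (rnorm F (Fintype.card I) * tau (combine qI qJ qL))) *
          (rnorm F (Fintype.card I) * tau (combine qI' qJ qL'))
          = ((Fintype.card F : ℂ) ^ Fintype.card I * ((Fintype.card F : ℂ) ^ Fintype.card J)⁻¹ *
              (rnorm F (Fintype.card I) * rnorm F (Fintype.card I))) *
            ((starRingEnd ℂ) (tau (combine qI qJ qL)) * tau (combine qI' qJ qL')) := by
        intro qJ
        rw [_root_.map_mul, aux_rnorm_conj]
        ring
      rw [Finset.sum_congr rfl fun qJ _ => hstep qJ, ← Finset.mul_sum,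
        aux_key2 hε hΛ htau, aux_rnorm_sq]
      by_cases hc : qI = qI' ∧ qL = qL'
      · rw [if_pos hc, if_pos hc]
        field_simp
      · rw [if_neg hc, if_neg hc, mul_zero]
    by_cases hq : qL = qL'
    · subst hq
      rw [if_pos rfl, ← aux_kernelMap_id]
      refine aux_kernelMap_congr fun qI qI' => ?_
      have h := hker qI qI'
      simp only [and_true] at h
      exact h
    · rw [if_neg hq, ← aux_kernelMap_zero]
      refine aux_kernelMap_congr fun qI qI' => ?_
      have h := hker qI qI'
      rw [if_neg (fun hh => hq hh.2)] at h
      exact h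
  -- completeness
  have hcomp : (∑ qL : L → F, gcode tau qL ∘ₗ hAdj (gcode tau qL)) = LinearMap.id := by
    have hterm : ∀ qL : L → F, gcode (I := I) tau qL ∘ₗ hAdj (gcode tau qL)
        = kernelMap (fun qJ qJ' => ∑ qI : I → F,
            (rnorm F (Fintype.card I) * tau (combine qI qJ qL)) *
            ((Fintype.card F : ℂ) ^ Fintype.card I * ((Fintype.card F : ℂ) ^ Fintype.card J)⁻¹ *
              (starRingEnd ℂ) (rnorm F (Fintype.card I) * tau (combine qI qJ' qL)))) := by
      intro qL
      rw [hgc qL, aux_hAdj_kernelMap, aux_kernelMap_comp]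
    rw [Finset.sum_congr rfl fun qL _ => hterm qL, aux_kernelMap_sum, ← aux_kernelMap_id]
    refine aux_kernelMap_congr fun qJ qJ' => ?_
    have hstep : ∀ (qL : L → F) (qI : I → F),
        (rnorm F (Fintype.card I) * tau (combine qI qJ qL)) *
          ((Fintype.card F : ℂ) ^ Fintype.card I * ((Fintype.card F : ℂ) ^ Fintype.card J)⁻¹ *
            (starRingEnd ℂ) (rnorm F (Fintype.card I) * tau (combine qI qJ' qL)))
        = ((Fintype.card F : ℂ) ^ Fintype.card I * ((Fintype.card F : ℂ) ^ Fintype.card J)⁻¹ *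
            (rnorm F (Fintype.card I) * rnorm F (Fintype.card I))) *
          (tau (combine qI qJ qL) * (starRingEnd ℂ) (tau (combine qI qJ' qL))) := by
      intro qL qI
      rw [_root_.map_mul, aux_rnorm_conj]
      ring
    rw [Finset.sum_congr rfl fun qL _ => Finset.sum_congr rfl fun qI _ => hstep qL qI]
    rw [Finset.sum_congr rfl fun qL _ => (Finset.mul_sum _ _ _).symm, ← Finset.mul_sum,
      aux_key3 hε hΛ htau, aux_rnorm_sq]
    by_cases hq : qJ = qJ'
    · rw [if_pos hq, if_pos hq, ← hcard]
      field_simp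
    · rw [if_neg hq, if_neg hq, mul_zero]
  -- isometry
  have hiso : ∀ (qL : L → F) (ψ φ : HS F I),
      hinner (gcode tau qL ψ) (gcode tau qL φ) = hinner ψ φ := by
    intro qL ψ φ
    rw [aux_hAdj_spec (gcode tau qL) ψ (gcode tau qL φ)]
    have h2 := horth qL qL
    rw [if_pos rfl] at h2
    have h3 : hAdj (gcode tau qL) (gcode tau qL φ) = φ := by
      have h4 := LinearMap.ext_iff.1 h2 φ
      simpa using h4
    rw [h3]
  exact ⟨fun qL ψ φ => aux_hAdj_spec (gcode tau qL) ψ φ, horth, hcomp, hiso, hcard⟩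
end
end
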